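/- arXiv:1607.00973 — 4 statements merged into one kernel-verified Lean document; each statement's English description precedes it below -/
import Mathlib

section
/- Let n be a natural number and let τ : {0,1,…,n-1} → ℝ be a sequence of real values. Suppose there is a function m defined on indices k ≥ 1 such that for every k ≥ 1: (i) m(k) < k, (ii) τ(m(k)) ≤ τ(k), and (iii) τ(p) ≤ τ(k) for every index p with m(k) < p < k. Then τ is monotonically nondecreasing: τ(p) ≤ τ(k) whenever p ≤ k. -/
/-- The combinatorial core of the monotonicity lemma for Fast Marching:
if every finalized index `k ≥ 1` has a "trigger" index `m k < k` with
`τ (m k) ≤ τ k`, and every intermediate index `p` with `m k < p < k`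
satisfies `τ p ≤ τ k`, then `τ` is monotonically nondecreasing on `{0,…,n-1}`. -/
theorem fast_marching_monotone (n : ℕ) (τ : ℕ → ℝ) (m : ℕ → ℕ)
    (hm : ∀ k, 1 ≤ k → k < n → m k < k)
    (hτm : ∀ k, 1 ≤ k → k < n → τ (m k) ≤ τ k)
    (hfront : ∀ k, 1 ≤ k → k < n → ∀ p, m k < p → p < k → τ p ≤ τ k) :
    ∀ p k, p ≤ k → k < n → τ p ≤ τ k := by
  intro p k
  induction k using Nat.strong_induction_on generalizing p with
  | _ k ih =>
    intro hpk hkn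
    rcases eq_or_lt_of_le hpk with h | h
    · subst h; exact le_refl _
    · have hk1 : 1 ≤ k := Nat.one_le_iff_ne_zero.mpr (by omega)
      by_cases hpm : m k < p
      · exact hfront k hk1 hkn p hpm h
      · have hmk := hm k hk1 hkn
        have h1 : τ p ≤ τ (m k) :=
          ih (m k) hmk p (by omega) (by omega)
        exact h1.trans (hτm k hk1 hkn)
end

section
/- Let E be the Euclidean space ℝ^d (d ≥ 1), let x0 ∈ E, and let τ0(x) = ‖x − x0‖. Suppose τ1 : E → ℝ is continuously differentiable on a neighborhood U of x0 with τ1(x0) ≥ 0, and suppose κ : E → ℝ is continuous at x0 with κ(x0) ≥ 0. If the function τ = τ0·τ1 satisfies the eikonal equation ‖∇τ(x)‖² = κ(x)² for every x ∈ U with x ≠ x0, then τ1(x0) = κ(x0). -/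
set_option maxHeartbeats 1000000
set_option synthInstance.maxHeartbeats 400000

open Filter Topology Real

/-- Derivative of the distance-to-`x0` function away from `x0`. -/
lemma aux_hasFDerivAt_dist {E : Type*} [NormedAddCommGroup E] [InnerProductSpace ℝ E]
    (x0 x : E) (hx : x ≠ x0) :
    HasFDerivAt (fun y => ‖y - x0‖) ((‖x - x0‖⁻¹) • innerSL ℝ (x - x0)) x := by
  have hne : x - x0 ≠ 0 := sub_ne_zero.mpr hx
  have hnorm : ‖x - x0‖ ≠ 0 := norm_ne_zero_iff.mpr hne
  have h1 : HasFDerivAt (fun y : E => y - x0) (ContinuousLinearMap.id ℝ E) x :=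
    (hasFDerivAt_id x).sub_const x0
  have h2 : HasFDerivAt (fun y : E => ‖y - x0‖ ^ 2)
      (2 • (innerSL ℝ (x - x0)).comp (ContinuousLinearMap.id ℝ E)) x := h1.norm_sq
  have hxne : (fun y : E => ‖y - x0‖ ^ 2) x ≠ 0 := by
    simpa using pow_ne_zero 2 hnorm
  have h3 := h2.sqrt hxne
  have hfun : (fun y : E => √(‖y - x0‖ ^ 2)) = fun y : E => ‖y - x0‖ := by
    funext y; exact Real.sqrt_sq (norm_nonneg _)
  rw [hfun] at h3
  convert h3 using 1
  have hsq : √(‖x - x0‖ ^ 2) = ‖x - x0‖ := Real.sqrt_sq (norm_nonneg _)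
  ext z
  simp [hsq, ContinuousLinearMap.smul_apply, smul_eq_mul]
  field_simp

/-- Initialization of factored Fast Marching: with `τ0(x) = ‖x − x0‖` and `τ1`
continuously differentiable on a neighborhood `U` of `x0` with `τ1 x0 ≥ 0`, if
`τ = τ0 ⬝ τ1` satisfies the eikonal equation `‖∇τ(x)‖² = κ(x)²` for all
`x ∈ U`, `x ≠ x0`, where `κ` is continuous at `x0` with `κ x0 ≥ 0`, then
`τ1 x0 = κ x0`. -/
theorem factored_initialization (d : ℕ) (hd : 1 ≤ d)
    (x0 : EuclideanSpace ℝ (Fin d)) (τ1 κ : EuclideanSpace ℝ (Fin d) → ℝ)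
    (U : Set (EuclideanSpace ℝ (Fin d))) (hU : U ∈ nhds x0)
    (hτ1 : ContDiffOn ℝ 1 τ1 U) (hτ1pos : 0 ≤ τ1 x0)
    (hκ : ContinuousAt κ x0) (hκpos : 0 ≤ κ x0)
    (heik : ∀ x ∈ U, x ≠ x0 →
      ‖gradient (fun y => ‖y - x0‖ * τ1 y) x‖ ^ 2 = κ x ^ 2) :
    τ1 x0 = κ x0 := by
  haveI : Nontrivial (EuclideanSpace ℝ (Fin d)) := by
    haveI : Nonempty (Fin d) := ⟨⟨0, hd⟩⟩
    infer_instance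
  haveI : NeBot (𝓝[≠] x0) := Module.punctured_nhds_neBot ℝ (EuclideanSpace ℝ (Fin d)) x0
  -- extract a continuous derivative of τ1 near x0
  have hat : ContDiffAt ℝ ((0 : ℕ) + 1) τ1 x0 := by
    exact_mod_cast hτ1.contDiffAt hU
  obtain ⟨f', ⟨u, hu, hfd⟩, hf'c⟩ := contDiffAt_succ_iff_hasFDerivAt.mp hat
  have hτ1c : ContinuousAt τ1 x0 := hat.continuousAt
  set g : EuclideanSpace ℝ (Fin d) → ℝ := fun x => ‖gradient (fun y => ‖y - x0‖ * τ1 y) x‖ with hg_def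
  -- key bound
  have hkey : ∀ᶠ x in 𝓝[≠] x0, ‖g x - |τ1 x|‖ ≤ ‖x - x0‖ * ‖f' x‖ := by
    filter_upwards [nhdsWithin_le_nhds hu, self_mem_nhdsWithin] with x hxu hxne
    have hxne' : x ≠ x0 := hxne
    have hD0 := aux_hasFDerivAt_dist x0 x hxne'
    have hD1 : HasFDerivAt τ1 (f' x) x := hfd x hxu
    have hmul : HasFDerivAt (fun y => ‖y - x0‖ * τ1 y)
        ((‖x - x0‖) • f' x + τ1 x • ((‖x - x0‖⁻¹) • innerSL ℝ (x - x0))) x :=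
      hD0.mul hD1
    have hgrad : g x = ‖(‖x - x0‖) • f' x + τ1 x • ((‖x - x0‖⁻¹) • innerSL ℝ (x - x0))‖ := by
      rw [hg_def]
      show ‖(InnerProductSpace.toDual ℝ (EuclideanSpace ℝ (Fin d))).symm _‖ = _
      rw [LinearIsometryEquiv.norm_map, hmul.fderiv]
    have hD0norm : ‖(‖x - x0‖⁻¹) • innerSL ℝ (x - x0)‖ = 1 := by
      rw [norm_smul (‖x - x0‖⁻¹) (innerSL ℝ (x - x0)), innerSL_apply_norm, norm_inv, norm_norm]
      field_simp [norm_ne_zero_iff.mpr (sub_ne_zero.mpr hxne')]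
    have hA : ‖τ1 x • ((‖x - x0‖⁻¹) • innerSL ℝ (x - x0))‖ = |τ1 x| := by
      rw [norm_smul (τ1 x) ((‖x - x0‖⁻¹) • innerSL ℝ (x - x0)), hD0norm, mul_one,
        Real.norm_eq_abs]
    have hB : ‖(‖x - x0‖) • f' x‖ = ‖x - x0‖ * ‖f' x‖ := by
      rw [norm_smul (‖x - x0‖) (f' x), norm_norm]
    have h := abs_norm_sub_norm_le
      ((‖x - x0‖) • f' x + τ1 x • ((‖x - x0‖⁻¹) • innerSL ℝ (x - x0)))
      (τ1 x • ((‖x - x0‖⁻¹) • innerSL ℝ (x - x0)))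
    simp only [add_sub_cancel_right] at h
    rw [hA, hB] at h
    rw [hgrad, Real.norm_eq_abs]
    exact h
  -- limits
  have htend0 : Tendsto (fun x => ‖x - x0‖ * ‖f' x‖) (𝓝[≠] x0) (𝓝 0) := by
    have h1 : Tendsto (fun x : EuclideanSpace ℝ (Fin d) => ‖x - x0‖ * ‖f' x‖) (𝓝 x0) (𝓝 (‖x0 - x0‖ * ‖f' x0‖)) :=
      ((continuous_id.sub continuous_const).norm.continuousAt).mul hf'c.continuousAt.norm
    have : (‖x0 - x0‖ * ‖f' x0‖) = 0 := by simp
    rw [this] at h1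
    exact h1.mono_left nhdsWithin_le_nhds
  have hdiff : Tendsto (fun x => g x - |τ1 x|) (𝓝[≠] x0) (𝓝 0) :=
    squeeze_zero_norm' hkey htend0
  have habs : Tendsto (fun x => |τ1 x|) (𝓝[≠] x0) (𝓝 |τ1 x0|) :=
    (hτ1c.abs).tendsto.mono_left nhdsWithin_le_nhds
  have hg_tend : Tendsto g (𝓝[≠] x0) (𝓝 (|τ1 x0|)) := by
    have := hdiff.add habs
    simpa using this
  have hg2 : Tendsto (fun x => g x ^ 2) (𝓝[≠] x0) (𝓝 (|τ1 x0| ^ 2)) := hg_tend.pow 2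
  have heq : ∀ᶠ x in 𝓝[≠] x0, g x ^ 2 = κ x ^ 2 := by
    filter_upwards [nhdsWithin_le_nhds hU, self_mem_nhdsWithin] with x hxU hxne
    exact heik x hxU hxne
  have hk2 : Tendsto (fun x => κ x ^ 2) (𝓝[≠] x0) (𝓝 (κ x0 ^ 2)) :=
    ((hκ.pow 2).tendsto).mono_left nhdsWithin_le_nhds
  have hfinal : |τ1 x0| ^ 2 = κ x0 ^ 2 :=
    tendsto_nhds_unique (hg2.congr' heq) hk2
  rw [abs_of_nonneg hτ1pos] at hfinal
  nlinarith [hτ1pos, hκpos]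
end

section
/- Let K be a finite nonempty index set, let α_k > 0 and β_k ≥ 0 for each k ∈ K, and let κ > 0. Then there exists a unique real number t satisfying ∑_{k∈K} max(α_k(t − β_k), 0)² = κ², and this t satisfies min_{k∈K} β_k < t ≤ min_{k∈K} (β_k + κ/α_k). -/
/-- Solvability, uniqueness and causality bounds for the piecewise quadratic
local update equation `∑ₖ max(αₖ(t − βₖ), 0)² = κ²` of the Fast Marching
algorithm, with `αₖ > 0`, `βₖ ≥ 0` and `κ > 0`: it has a unique real solution
`t`, and this `t` satisfies `minₖ βₖ < t ≤ minₖ (βₖ + κ/αₖ)`. -/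
theorem piecewise_quadratic_unique_solution
    (K : Type*) [Fintype K] [Nonempty K] (α β : K → ℝ)
    (hα : ∀ k, 0 < α k) (hβ : ∀ k, 0 ≤ β k) (κ : ℝ) (hκ : 0 < κ) :
    (∃! t : ℝ, ∑ k, max (α k * (t - β k)) 0 ^ 2 = κ ^ 2) ∧
    ∀ t : ℝ, (∑ k, max (α k * (t - β k)) 0 ^ 2 = κ ^ 2) →
      Finset.univ.inf' Finset.univ_nonempty β < t ∧
      t ≤ Finset.univ.inf' Finset.univ_nonempty (fun k => β k + κ / α k) := by
  classical
  set f : ℝ → ℝ := fun t => ∑ k, max (α k * (t - β k)) 0 ^ 2 with hf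
  set m := Finset.univ.inf' Finset.univ_nonempty β with hm
  set M := Finset.univ.inf' Finset.univ_nonempty (fun k => β k + κ / α k) with hM
  obtain ⟨k₀, -, hk₀⟩ := Finset.exists_mem_eq_inf' (Finset.univ_nonempty (α := K)) β
  obtain ⟨k₁, -, hk₁⟩ :=
    Finset.exists_mem_eq_inf' (Finset.univ_nonempty (α := K)) (fun k => β k + κ / α k)
  rw [← hm] at hk₀
  rw [← hM] at hk₁
  have hmβ : ∀ k, m ≤ β k := fun k => Finset.inf'_le _ (Finset.mem_univ k)
  have hcont : Continuous f := by
    apply continuous_finset_sum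
    intro k _
    exact ((continuous_const.mul (continuous_id.sub continuous_const)).max
      continuous_const).pow 2
  have hfm0 : ∀ t ≤ m, f t = 0 := by
    intro t ht
    apply Finset.sum_eq_zero
    intro k _
    have h1 : α k * (t - β k) ≤ 0 := by nlinarith [hα k, hmβ k]
    rw [max_eq_right h1]
    norm_num
  have hsm : StrictMonoOn f (Set.Ici m) := by
    intro s hs t ht hst
    apply Finset.sum_lt_sum
    · intro k _
      have h1 : α k * (s - β k) ≤ α k * (t - β k) := by nlinarith [hα k]
      exact pow_le_pow_left₀ (le_max_right _ _) (max_le_max h1 le_rfl) 2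
    · refine ⟨k₀, Finset.mem_univ _, ?_⟩
      have hβs : β k₀ ≤ s := hk₀ ▸ hs
      have hs' : 0 ≤ α k₀ * (s - β k₀) := by nlinarith [hα k₀]
      have ht' : α k₀ * (s - β k₀) < α k₀ * (t - β k₀) := by nlinarith [hα k₀]
      rw [max_eq_left hs', max_eq_left (le_trans hs' ht'.le)]
      exact pow_lt_pow_left₀ ht' hs' (by norm_num)
  have hfM : κ ^ 2 ≤ f M := by
    have hterm : max (α k₁ * (M - β k₁)) 0 ^ 2 = κ ^ 2 := by
      have h2 : α k₁ * (M - β k₁) = κ := by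
        rw [hk₁]
        field_simp
        rw [add_sub_cancel_left, mul_div_assoc', mul_div_cancel_left₀ κ (hα k₁).ne']
      rw [h2, max_eq_left hκ.le]
    calc κ ^ 2 = max (α k₁ * (M - β k₁)) 0 ^ 2 := hterm.symm
      _ ≤ f M := by
        simp only [hf]
        exact Finset.single_le_sum (f := fun k => (α k * (M - β k) ⊔ 0) ^ 2)
          (fun k _ => sq_nonneg _) (Finset.mem_univ k₁)
  have hmM : m ≤ M := by
    have h1 := hmβ k₁
    have h2 : 0 < κ / α k₁ := div_pos hκ (hα k₁)
    rw [hk₁]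
    linarith
  obtain ⟨t, ht, hft⟩ := intermediate_value_Icc hmM hcont.continuousOn
    (show κ ^ 2 ∈ Set.Icc (f m) (f M) from ⟨by rw [hfm0 m le_rfl]; positivity, hfM⟩)
  have hsol_gt : ∀ s, f s = κ ^ 2 → m < s := by
    intro s hfs
    by_contra h
    push_neg at h
    rw [hfm0 s h] at hfs
    nlinarith
  have hsol_le : ∀ s, f s = κ ^ 2 → s ≤ M := by
    intro s hfs
    by_contra h
    push_neg at h
    have := hsm (Set.mem_Ici.mpr hmM) (Set.mem_Ici.mpr (hmM.trans h.le)) h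
    rw [hfs] at this
    linarith
  refine ⟨⟨t, hft, fun s hfs => hsm.injOn (Set.mem_Ici.mpr (hsol_gt s hfs).le)
    (Set.mem_Ici.mpr (hsol_gt t hft).le) (by rw [show f s = κ ^ 2 from hfs, hft])⟩,
    fun s hfs => ⟨hsol_gt s hfs, hsol_le s hfs⟩⟩
end

section
/- Let E be the Euclidean space ℝ^d with its standard inner product, let x0 ∈ E, let e ∈ E be a unit vector, and let a, s0 be real numbers. Define κ²(x) = s0² + 2a⟨e, x − x0⟩, S̄²(x) = s0² + a⟨e, x − x0⟩, σ(x) = sqrt( 2‖x − x0‖² / ( S̄²(x) + sqrt( S̄²(x)² − a²‖x − x0‖² ) ) ), and τ(x) = S̄²(x)·σ(x) − (1/6)a²σ(x)³. Then at every point x of the open set U = { x : x ≠ x0, s0² + 2a⟨e, x − x0⟩ > 0, and S̄²(x)² > a²‖x − x0‖² }, the function τ is differentiable and satisfies the eikonal equation ‖∇τ(x)‖² = s0² + 2a⟨e, x − x0⟩ = κ(x)². -/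
open RealInnerProductSpace

/-- `S̄²(x) = s0² + a ⟪e, x − x0⟫`. -/
noncomputable def Sbar2 {d : ℕ} (x0 e : EuclideanSpace ℝ (Fin d))
    (a s0 : ℝ) (x : EuclideanSpace ℝ (Fin d)) : ℝ :=
  s0 ^ 2 + a * ⟪e, x - x0⟫

/-- `σ(x) = sqrt( 2‖x − x0‖² / ( S̄²(x) + sqrt( S̄²(x)² − a²‖x − x0‖² ) ) )`. -/
noncomputable def sigmaFun {d : ℕ} (x0 e : EuclideanSpace ℝ (Fin d))
    (a s0 : ℝ) (x : EuclideanSpace ℝ (Fin d)) : ℝ :=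
  Real.sqrt (2 * ‖x - x0‖ ^ 2 /
    (Sbar2 x0 e a s0 x +
      Real.sqrt ((Sbar2 x0 e a s0 x) ^ 2 - a ^ 2 * ‖x - x0‖ ^ 2)))

/-- The exact travel time `τ(x) = S̄²(x)·σ(x) − (1/6)a²σ(x)³` for a medium with
constant gradient of the squared slowness. -/
noncomputable def tauCase1 {d : ℕ} (x0 e : EuclideanSpace ℝ (Fin d))
    (a s0 : ℝ) (x : EuclideanSpace ℝ (Fin d)) : ℝ :=
  Sbar2 x0 e a s0 x * sigmaFun x0 e a s0 x -
    (1 / 6) * a ^ 2 * (sigmaFun x0 e a s0 x) ^ 3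

set_option maxHeartbeats 2000000 in
/-- Test case 1 (constant gradient of squared slowness): on the open set where
`x ≠ x0`, `s0² + 2a⟪e, x − x0⟫ > 0` and `S̄²(x)² > a²‖x − x0‖²`, the function
`τ` is differentiable and satisfies the eikonal equation
`‖∇τ(x)‖² = s0² + 2a⟪e, x − x0⟫ = κ(x)²`. -/
theorem eikonal_constant_gradient_squared_slowness (d : ℕ)
    (x0 e : EuclideanSpace ℝ (Fin d)) (he : ‖e‖ = 1) (a s0 : ℝ) :
    ∀ x : EuclideanSpace ℝ (Fin d), x ≠ x0 →
      s0 ^ 2 + 2 * a * ⟪e, x - x0⟫ > 0 →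
      (Sbar2 x0 e a s0 x) ^ 2 > a ^ 2 * ‖x - x0‖ ^ 2 →
      DifferentiableAt ℝ (tauCase1 x0 e a s0) x ∧
      ‖gradient (tauCase1 x0 e a s0) x‖ ^ 2 = s0 ^ 2 + 2 * a * ⟪e, x - x0⟫ := by
  intro x hx hK hDD
  set u : EuclideanSpace ℝ (Fin d) := x - x0 with hu
  have hune : u ≠ 0 := sub_ne_zero.mpr hx
  set P : ℝ := ⟪e, u⟫ with hP
  set R : ℝ := ‖u‖ ^ 2 with hR
  have hRpos : 0 < R := by
    rw [hR]; exact pow_pos (norm_pos_iff.mpr hune) 2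
  set S : ℝ := s0 ^ 2 + a * P with hSdef
  have hSval : Sbar2 x0 e a s0 x = S := rfl
  rw [hSval] at hDD
  have hQpos : 0 < S ^ 2 - a ^ 2 * R := by linarith [hDD]
  have hSpos : 0 < S := by nlinarith [sq_nonneg s0, hK, sq_nonneg a, hRpos, Real.sqrt_nonneg (S^2 - a^2*R)]
  set Dv : ℝ := Real.sqrt (S ^ 2 - a ^ 2 * R) with hDv
  have hDpos : 0 < Dv := Real.sqrt_pos.mpr hQpos
  have hD2 : Dv ^ 2 = S ^ 2 - a ^ 2 * R := Real.sq_sqrt hQpos.le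
  have hMpos : 0 < S + Dv := by linarith
  set σ : ℝ := Real.sqrt (2 * R / (S + Dv)) with hσdef
  have hσval : sigmaFun x0 e a s0 x = σ := rfl
  have hσpos : 0 < σ := Real.sqrt_pos.mpr (by positivity)
  have hσ2 : σ ^ 2 = 2 * R / (S + Dv) := Real.sq_sqrt (by positivity)
  have hMσ : σ ^ 2 * (S + Dv) = 2 * R := by
    rw [hσ2]; field_simp
  have haσ : a ^ 2 * σ ^ 2 = 2 * (S - Dv) := by
    have h := mul_left_cancel₀ (ne_of_gt hMpos) (show (S + Dv) * (a ^ 2 * σ ^ 2) = (S + Dv) * (2 * (S - Dv)) by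
      linear_combination a ^ 2 * hMσ + 2 * hD2)
    exact h
  -- base derivatives
  set A : EuclideanSpace ℝ (Fin d) →L[ℝ] ℝ := innerSL ℝ e with hA
  set B : EuclideanSpace ℝ (Fin d) →L[ℝ] ℝ := innerSL ℝ u with hB
  have h1 : HasFDerivAt (fun y : EuclideanSpace ℝ (Fin d) => ⟪e, y - x0⟫) A x := by
    exact ((innerSL ℝ e).hasFDerivAt (x := x - x0)).comp x ((hasFDerivAt_id x).sub_const x0)
  have h2 : HasFDerivAt (fun y : EuclideanSpace ℝ (Fin d) => ‖y - x0‖ ^ 2) ((2:ℝ) • B) x := by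
    have h := ((hasFDerivAt_id x).sub_const x0).inner ℝ ((hasFDerivAt_id x).sub_const x0)
    have heq : (fun y : EuclideanSpace ℝ (Fin d) => ‖y - x0‖ ^ 2) = fun y => ⟪y - x0, y - x0⟫ := by
      ext y; rw [real_inner_self_eq_norm_sq]
    rw [heq]
    refine h.congr_fderiv ?_
    ext y
    simp only [ContinuousLinearMap.smul_apply, hB, innerSL_apply_apply, fderivInnerCLM_apply,
      ContinuousLinearMap.comp_apply, ContinuousLinearMap.prod_apply, ContinuousLinearMap.id_apply,
      smul_eq_mul, id_eq]
    rw [real_inner_comm y]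
    ring
  have hS : HasFDerivAt (Sbar2 x0 e a s0) (a • A) x := by
    have := (h1.const_mul a).const_add (s0 ^ 2)
    exact this
  have hSx : Sbar2 x0 e a s0 x = S := rfl
  have hSsq : HasFDerivAt (fun y => (Sbar2 x0 e a s0 y) ^ 2)
      (S • (a • A) + S • (a • A)) x := by
    have := hS.mul hS
    rw [hSx] at this
    simp only [pow_two]
    exact this
  set LQ : EuclideanSpace ℝ (Fin d) →L[ℝ] ℝ := (S • (a • A) + S • (a • A)) - (a ^ 2) • ((2:ℝ) • B) with hLQ
  have hQ : HasFDerivAt (fun y => (Sbar2 x0 e a s0 y) ^ 2 - a ^ 2 * ‖y - x0‖ ^ 2) LQ x :=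
    hSsq.sub (h2.const_mul (a ^ 2))
  have hQx : (Sbar2 x0 e a s0 x) ^ 2 - a ^ 2 * ‖x - x0‖ ^ 2 = S ^ 2 - a ^ 2 * R := rfl
  have hDfun : HasFDerivAt (fun y => Real.sqrt ((Sbar2 x0 e a s0 y) ^ 2 - a ^ 2 * ‖y - x0‖ ^ 2))
      ((1 / (2 * Dv)) • LQ) x := by
    have h := (Real.hasDerivAt_sqrt (ne_of_gt hQpos)).comp_hasFDerivAt_of_eq x hQ rfl
    exact h
  -- the denominator M(y) = S(y) + D(y)
  set LM : EuclideanSpace ℝ (Fin d) →L[ℝ] ℝ := a • A + (1 / (2 * Dv)) • LQ with hLM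
  have hMfun : HasFDerivAt (fun y => Sbar2 x0 e a s0 y +
      Real.sqrt ((Sbar2 x0 e a s0 y) ^ 2 - a ^ 2 * ‖y - x0‖ ^ 2)) LM x := hS.add hDfun
  have hMx : Sbar2 x0 e a s0 x +
      Real.sqrt ((Sbar2 x0 e a s0 x) ^ 2 - a ^ 2 * ‖x - x0‖ ^ 2) = S + Dv := rfl
  have hMne : Sbar2 x0 e a s0 x +
      Real.sqrt ((Sbar2 x0 e a s0 x) ^ 2 - a ^ 2 * ‖x - x0‖ ^ 2) ≠ 0 := by
    rw [hMx]; exact ne_of_gt hMpos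
  have hNfun : HasFDerivAt (fun y : EuclideanSpace ℝ (Fin d) => 2 * ‖y - x0‖ ^ 2)
      ((2:ℝ) • ((2:ℝ) • B)) x := h2.const_mul 2
  -- quotient
  set Lq : EuclideanSpace ℝ (Fin d) →L[ℝ] ℝ :=
    ((S + Dv)⁻¹ * 2) • ((2:ℝ) • B) + (-(2 * R) / (S + Dv) ^ 2) • LM with hLq
  have hquot : HasFDerivAt (fun y => 2 * ‖y - x0‖ ^ 2 /
      (Sbar2 x0 e a s0 y +
        Real.sqrt ((Sbar2 x0 e a s0 y) ^ 2 - a ^ 2 * ‖y - x0‖ ^ 2))) Lq x := by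
    have hinv : HasFDerivAt (fun y => (Sbar2 x0 e a s0 y +
        Real.sqrt ((Sbar2 x0 e a s0 y) ^ 2 - a ^ 2 * ‖y - x0‖ ^ 2))⁻¹)
        (-(((S + Dv) ^ 2)⁻¹ • LM)) x := by
      have h := (hasDerivAt_inv (ne_of_gt hMpos)).comp_hasFDerivAt_of_eq x hMfun rfl
      exact h.congr_fderiv (neg_smul _ _)
    have h := hNfun.mul hinv
    rw [hMx] at h
    have harr : (fun y => 2 * ‖y - x0‖ ^ 2 * (Sbar2 x0 e a s0 y +
        Real.sqrt ((Sbar2 x0 e a s0 y) ^ 2 - a ^ 2 * ‖y - x0‖ ^ 2))⁻¹) =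
        (fun y => 2 * ‖y - x0‖ ^ 2 / (Sbar2 x0 e a s0 y +
        Real.sqrt ((Sbar2 x0 e a s0 y) ^ 2 - a ^ 2 * ‖y - x0‖ ^ 2))) := by
      ext y; rw [div_eq_mul_inv]
    rw [← harr]
    refine h.congr_fderiv ?_
    rw [hLq]
    ext y
    simp only [ContinuousLinearMap.add_apply, ContinuousLinearMap.smul_apply, smul_eq_mul, ContinuousLinearMap.neg_apply]
    have : (R : ℝ) = ‖x - x0‖ ^ 2 := rfl
    rw [this]
    field_simp
    ring
  -- sigma
  have hquotx : 2 * ‖x - x0‖ ^ 2 / (Sbar2 x0 e a s0 x +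
      Real.sqrt ((Sbar2 x0 e a s0 x) ^ 2 - a ^ 2 * ‖x - x0‖ ^ 2)) = 2 * R / (S + Dv) := rfl
  have hσfun : HasFDerivAt (sigmaFun x0 e a s0) ((1 / (2 * σ)) • Lq) x := by
    have h := (Real.hasDerivAt_sqrt (show 2 * R / (S + Dv) ≠ 0 by positivity)).comp_hasFDerivAt_of_eq x hquot rfl
    have heq : (Real.sqrt ∘ fun y => 2 * ‖y - x0‖ ^ 2 /
        (Sbar2 x0 e a s0 y +
          Real.sqrt ((Sbar2 x0 e a s0 y) ^ 2 - a ^ 2 * ‖y - x0‖ ^ 2))) = sigmaFun x0 e a s0 := by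
      ext y; simp [Function.comp, sigmaFun]
    rw [heq] at h
    simpa [hσdef] using h
  -- tau
  have hτ : HasFDerivAt (tauCase1 x0 e a s0)
      ((S • ((1 / (2 * σ)) • Lq) + σ • (a • A)) -
        ((1/6) * a ^ 2) • ((σ * σ) • ((1 / (2 * σ)) • Lq) + σ • ((σ • ((1 / (2 * σ)) • Lq)
          + σ • ((1 / (2 * σ)) • Lq))))) x := by
    have hσ3 : HasFDerivAt (fun y => (sigmaFun x0 e a s0 y) ^ 3)
        ((σ * σ) • ((1 / (2 * σ)) • Lq) + σ • ((σ • ((1 / (2 * σ)) • Lq)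
          + σ • ((1 / (2 * σ)) • Lq))) ) x := by
      have h := hσfun.mul (hσfun.mul hσfun)
      rw [hσval] at h
      have : (fun y => sigmaFun x0 e a s0 y * (sigmaFun x0 e a s0 y * sigmaFun x0 e a s0 y)) =
          (fun y => (sigmaFun x0 e a s0 y) ^ 3) := by ext y; ring
      rw [← this]; rw [Pi.mul_apply, hσval] at h
      refine h.congr_fderiv ?_
      module
    have h := (hS.mul hσfun).sub (hσ3.const_mul ((1/6) * a ^ 2))
    rw [hSx, hσval] at h
    exact h
  -- identify the gradient
  set v : EuclideanSpace ℝ (Fin d) := (a * σ / 2) • e + σ⁻¹ • u with hv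
  have hgrad : HasGradientAt (tauCase1 x0 e a s0) v x := by
    rw [hasGradientAt_iff_hasFDerivAt]
    refine hτ.congr_fderiv ?_
    ext y
    simp only [ContinuousLinearMap.add_apply, ContinuousLinearMap.sub_apply,
      ContinuousLinearMap.smul_apply, smul_eq_mul, hLq, hLM, hLQ, hA, hB,
      InnerProductSpace.toDual_apply_apply, hv, inner_add_left, inner_smul_left, innerSL_apply_apply,
      RCLike.inner_apply, conj_trivial, map_sub]
    set c1 : ℝ := ⟪e, y⟫
    set c2 : ℝ := ⟪u, y⟫
    have hDvne : Dv ≠ 0 := ne_of_gt hDpos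
    have hσne : σ ≠ 0 := ne_of_gt hσpos
    have hMne' : S + Dv ≠ 0 := ne_of_gt hMpos
    clear_value c1 c2 P R S Dv σ u A B LQ LM Lq v
    clear hτ hquot hquotx hσfun hMfun hMx hMne hNfun hDfun hQ hQx hSsq hS h1 h2 hSval hSx hσval hA hB hLQ hLM hLq hv hu hune hx hP hR hσdef hσ2 hDv hDD hK hSdef
    have key : ∀ ds : ℝ, S * ds + σ * (a * c1) -
        1 / 6 * a ^ 2 * (σ * σ * ds + σ * (σ * ds + σ * ds)) =
        σ * a * c1 + (S - a ^ 2 * σ ^ 2 / 2) * ds := by intro ds; ring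
    rw [key]
    have e1 : S - a ^ 2 * σ ^ 2 / 2 = Dv := by linarith [haσ]
    rw [e1]
    have hRe : R = σ ^ 2 * (S + Dv) / 2 := by linear_combination (-1/2 : ℝ) * hMσ
    subst hRe
    field_simp
    linear_combination (2 * c2) * haσ
  refine ⟨hgrad.differentiableAt, ?_⟩
  rw [hgrad.gradient]
  have hnorm : ‖v‖ ^ 2 = (a * σ / 2) ^ 2 * 1 + 2 * ((a * σ / 2) * σ⁻¹) * P + σ⁻¹ ^ 2 * R := by
    rw [hv, ← real_inner_self_eq_norm_sq]
    simp only [inner_add_add_self, inner_smul_left, inner_smul_right, conj_trivial,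
      real_inner_self_eq_norm_sq, he]
    rw [hP, real_inner_comm u e]
    ring
  rw [hnorm]
  have hRσ : σ⁻¹ ^ 2 * R = (S + Dv) / 2 := by
    have hRe : R = σ ^ 2 * (S + Dv) / 2 := by linear_combination (-1/2 : ℝ) * hMσ
    rw [hRe]
    field_simp
  have h1 : (a * σ / 2) ^ 2 * 1 = (S - Dv) / 2 := by
    have : (a * σ / 2) ^ 2 * 1 = a ^ 2 * σ ^ 2 / 4 := by ring
    rw [this, haσ]; ring
  have h2' : 2 * ((a * σ / 2) * σ⁻¹) * P = a * P := by
    field_simp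
  rw [h1, h2', hRσ]
  rw [hP]
  linear_combination hSdef
end
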